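/- Let d ≥ 1 and 1 ≤ q < ∞. Let X_1,…,X_n be independent random points uniformly distributed in [0,1]^d and P_n = {X_1,…,X_n}. Then lim_{n → ∞} n^{1/d} · ( E[ ∫_{[0,1]^d} dist(x, P_n)^q dx ] )^{1/q} = (1/2) · Γ(q/d + 1)^{1/q}, where Γ denotes the Gamma function. -/

import Mathlib

open MeasureTheory Set
open scoped ENNReal

/-- The maximum metric on the `d`-dimensional torus:
`dist(x,y) = min_{k ∈ ℤ^d} ‖x + k − y‖_∞` for `x, y ∈ [0,1]^d`. -/
noncomputable def tdist (d : ℕ) (x y : Fin d → ℝ) : ℝ :=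
  ⨅ k : Fin d → ℤ, ‖(x + fun i => (k i : ℝ)) - y‖

/-- one-dimensional circle distance -/
noncomputable def odist (a b : ℝ) : ℝ := ⨅ k : ℤ, |a + k - b|

lemma odist_bdd (a b : ℝ) : BddBelow (Set.range fun k : ℤ => |a + (k : ℝ) - b|) :=
  ⟨0, by rintro _ ⟨k, rfl⟩; exact abs_nonneg _⟩

lemma odist_le (a b : ℝ) (k : ℤ) : odist a b ≤ |a + k - b| := ciInf_le (odist_bdd a b) k

lemma odist_eq (a b : ℝ) : odist a b = |a + round (b - a) - b| := by
  refine le_antisymm (odist_le a b _) (le_ciInf fun k => ?_)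
  have h := round_le (b - a) k
  have e1 : a + (round (b - a) : ℝ) - b = -((b - a) - round (b - a)) := by ring
  have e2 : a + (k : ℝ) - b = -((b - a) - k) := by ring
  rw [e1, e2, abs_neg, abs_neg]; exact h

lemma odist_nonneg (a b : ℝ) : 0 ≤ odist a b := le_ciInf fun k => abs_nonneg _

lemma odist_le_half (a b : ℝ) : odist a b ≤ 1 / 2 := by
  rw [odist_eq]
  have e1 : a + (round (b - a) : ℝ) - b = -((b - a) - round (b - a)) := by ring
  rw [e1, abs_neg]; exact abs_sub_round _

lemma odist_le_iff {a b t : ℝ} : odist a b ≤ t ↔ ∃ k : ℤ, |a + k - b| ≤ t :=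
  ⟨fun h => ⟨round (b - a), (odist_eq a b) ▸ h⟩, fun ⟨k, hk⟩ => (odist_le a b k).trans hk⟩

lemma odist_lipschitz (a b a' b' : ℝ) : |odist a b - odist a' b'| ≤ |a - a'| + |b - b'| := by
  have key : ∀ u v u' v' : ℝ, odist u v ≤ odist u' v' + (|u - u'| + |v - v'|) := by
    intro u v u' v'
    have h : odist u v - (|u - u'| + |v - v'|) ≤ odist u' v' := by
      refine le_ciInf fun k => ?_
      have h1 : odist u v ≤ |u + k - v| := odist_le u v k
      have h2 : |u + k - v| ≤ |u' + k - v'| + (|u - u'| + |v - v'|) := by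
        have : u + k - v = (u' + k - v') + ((u - u') + (v' - v)) := by ring
        rw [this]
        refine (abs_add_le _ _).trans ?_
        have := abs_add_le (u - u') (v' - v)
        have e : |v' - v| = |v - v'| := abs_sub_comm _ _
        linarith
      linarith
    linarith
  rw [abs_sub_le_iff]
  constructor
  · have := key a b a' b'; linarith
  · have h := key a' b' a b
    have e1 : |a' - a| = |a - a'| := abs_sub_comm _ _
    have e2 : |b' - b| = |b - b'| := abs_sub_comm _ _
    linarith

lemma continuous_odist : Continuous (fun p : ℝ × ℝ => odist p.1 p.2) := by
  rw [Metric.continuous_iff]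
  intro p ε hε
  refine ⟨ε / 2, by linarith, fun q hq => ?_⟩
  have h1 : dist q.1 p.1 < ε / 2 := lt_of_le_of_lt (le_max_left _ _) (by simpa [Prod.dist_eq] using hq)
  have h2 : dist q.2 p.2 < ε / 2 := lt_of_le_of_lt (le_max_right _ _) (by simpa [Prod.dist_eq] using hq)
  have := odist_lipschitz q.1 q.2 p.1 p.2
  rw [Real.dist_eq] at h1 h2 ⊢
  linarith

section tdistLemmas
variable {d : ℕ} (x y : Fin d → ℝ)

lemma tdist_bdd : BddBelow (Set.range fun k : Fin d → ℤ => ‖(x + fun i => (k i : ℝ)) - y‖) :=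
  ⟨0, by rintro _ ⟨k, rfl⟩; exact norm_nonneg _⟩

lemma tdist_nonneg : 0 ≤ tdist d x y := le_ciInf fun k => norm_nonneg _

lemma odist_le_tdist (i : Fin d) : odist (x i) (y i) ≤ tdist d x y := by
  refine le_ciInf fun k => ?_
  refine (odist_le (x i) (y i) (k i)).trans ?_
  have := norm_le_pi_norm ((x + fun j => ((k j : ℝ))) - y) i
  simpa using this

lemma tdist_le_iff {t : ℝ} (ht : 0 ≤ t) :
    tdist d x y ≤ t ↔ ∀ i, odist (x i) (y i) ≤ t := by
  constructor
  · intro h i; exact (odist_le_tdist x y i).trans h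
  · intro h
    refine (ciInf_le (tdist_bdd x y) (fun i => round (y i - x i))).trans ?_
    rw [pi_norm_le_iff_of_nonneg ht]
    intro i
    have := (odist_eq (x i) (y i)) ▸ h i
    simpa using this

lemma tdist_le_half : tdist d x y ≤ 1 / 2 :=
  (tdist_le_iff x y (by norm_num)).2 fun i => odist_le_half _ _

lemma tdist_eq_norm : tdist d x y = ‖fun i => odist (x i) (y i)‖ := by
  refine le_antisymm ?_ ?_
  · rw [tdist_le_iff x y (norm_nonneg _)]
    intro i
    refine (le_abs_self _).trans ?_
    exact norm_le_pi_norm (fun j => odist (x j) (y j)) i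
  · rw [pi_norm_le_iff_of_nonneg (tdist_nonneg x y)]
    intro i
    have : ‖odist (x i) (y i)‖ = odist (x i) (y i) :=
      Real.norm_of_nonneg (odist_nonneg _ _)
    rw [this]; exact odist_le_tdist x y i

lemma continuous_tdist : Continuous (fun p : (Fin d → ℝ) × (Fin d → ℝ) => tdist d p.1 p.2) := by
  have : (fun p : (Fin d → ℝ) × (Fin d → ℝ) => tdist d p.1 p.2)
      = fun p => ‖fun i => odist (p.1 i) (p.2 i)‖ := by
    funext p; exact tdist_eq_norm p.1 p.2
  rw [this]
  have hc : Continuous fun p : (Fin d → ℝ) × (Fin d → ℝ) => (fun i : Fin d => odist (p.1 i) (p.2 i)) := by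
    apply continuous_pi
    intro i
    have h1 : Continuous fun p : (Fin d → ℝ) × (Fin d → ℝ) => p.1 i :=
      (continuous_apply i).comp continuous_fst
    have h2 : Continuous fun p : (Fin d → ℝ) × (Fin d → ℝ) => p.2 i :=
      (continuous_apply i).comp continuous_snd
    exact continuous_odist.comp (h1.prodMk h2)
  exact hc.norm

end tdistLemmas

lemma measure_odist_le {a t : ℝ} (ha0 : 0 ≤ a) (ha1 : a ≤ 1) (ht0 : 0 ≤ t) (ht : t ≤ 1 / 2) :
    volume ({b : ℝ | odist a b ≤ t} ∩ Icc 0 1) = ENNReal.ofReal (2 * t) := by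
  rcases le_or_gt a t with hB | hB
  · -- left edge case : a ≤ t
    have hset : {b : ℝ | odist a b ≤ t} ∩ Icc 0 1 = Icc 0 (a + t) ∪ Icc (a + 1 - t) 1 := by
      ext b
      simp only [Set.mem_inter_iff, Set.mem_setOf_eq, Set.mem_Icc, Set.mem_union, odist_le_iff]
      constructor
      · rintro ⟨⟨k, hk⟩, hb0, hb1⟩
        rw [abs_le] at hk
        rcases lt_trichotomy k 0 with hk0 | hk0 | hk0
        · have hkr : (k : ℝ) + 1 ≤ 0 := by exact_mod_cast Int.lt_iff_add_one_le.mp hk0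
          have : (k : ℝ) ≤ -1 := by linarith
          left; constructor <;> linarith
        · subst hk0; left; push_cast at hk; constructor <;> linarith
        · have : (1 : ℝ) ≤ (k : ℝ) := by exact_mod_cast hk0
          right; constructor <;> linarith
      · rintro (⟨h0, h1⟩ | ⟨h0, h1⟩)
        · exact ⟨⟨0, by rw [abs_le]; push_cast; constructor <;> linarith⟩, h0, by linarith⟩
        · exact ⟨⟨1, by rw [abs_le]; push_cast; constructor <;> linarith⟩, by linarith, h1⟩
    rw [hset]
    rcases lt_or_eq_of_le ht with ht2 | ht2
    · have hdisj : Disjoint (Icc (0:ℝ) (a + t)) (Icc (a + 1 - t) 1) := by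
        apply Set.disjoint_left.mpr
        rintro b ⟨_, hb1⟩ ⟨hb2, _⟩
        linarith
      rw [Set.union_comm, measure_union hdisj.symm measurableSet_Icc,
        Real.volume_Icc, Real.volume_Icc,
        ← ENNReal.ofReal_add (by linarith) (by linarith)]
      congr 1; ring
    · have he : a + 1 - t = a + t := by linarith
      rw [he, Set.Icc_union_Icc_eq_Icc (by linarith) (by linarith), Real.volume_Icc]
      congr 1; linarith
  · rcases le_or_gt (1 - t) a with hC | hC
    · -- right edge case : 1 - t ≤ a
      have hset : {b : ℝ | odist a b ≤ t} ∩ Icc 0 1 = Icc 0 (a - 1 + t) ∪ Icc (a - t) 1 := by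
        ext b
        simp only [Set.mem_inter_iff, Set.mem_setOf_eq, Set.mem_Icc, Set.mem_union, odist_le_iff]
        constructor
        · rintro ⟨⟨k, hk⟩, hb0, hb1⟩
          rw [abs_le] at hk
          rcases lt_trichotomy k 0 with hk0 | hk0 | hk0
          · have hkr : (k : ℝ) + 1 ≤ 0 := by exact_mod_cast Int.lt_iff_add_one_le.mp hk0
            have : (k : ℝ) ≤ -1 := by linarith
            left; constructor <;> linarith
          · subst hk0; right; push_cast at hk; constructor <;> linarith
          · have : (1 : ℝ) ≤ (k : ℝ) := by exact_mod_cast hk0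
            right; constructor <;> linarith
        · rintro (⟨h0, h1⟩ | ⟨h0, h1⟩)
          · exact ⟨⟨-1, by rw [abs_le]; push_cast; constructor <;> linarith⟩, h0, by linarith⟩
          · exact ⟨⟨0, by rw [abs_le]; push_cast; constructor <;> linarith⟩, by linarith, h1⟩
      rw [hset]
      rcases lt_or_eq_of_le ht with ht2 | ht2
      · have hdisj : Disjoint (Icc (0:ℝ) (a - 1 + t)) (Icc (a - t) 1) := by
          apply Set.disjoint_left.mpr
          rintro b ⟨_, hb1⟩ ⟨hb2, _⟩
          linarith
        rw [Set.union_comm, measure_union hdisj.symm measurableSet_Icc,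
          Real.volume_Icc, Real.volume_Icc,
          ← ENNReal.ofReal_add (by linarith) (by linarith)]
        congr 1; ring
      · have he : a - 1 + t = a - t := by linarith
        rw [he, Set.Icc_union_Icc_eq_Icc (by linarith) (by linarith), Real.volume_Icc]
        congr 1; linarith
    · -- middle case : t < a < 1 - t
      have hset : {b : ℝ | odist a b ≤ t} ∩ Icc 0 1 = Icc (a - t) (a + t) := by
        ext b
        simp only [Set.mem_inter_iff, Set.mem_setOf_eq, Set.mem_Icc, odist_le_iff]
        constructor
        · rintro ⟨⟨k, hk⟩, hb0, hb1⟩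
          rw [abs_le] at hk
          rcases lt_trichotomy k 0 with hk0 | hk0 | hk0
          · have hkr : (k : ℝ) + 1 ≤ 0 := by exact_mod_cast Int.lt_iff_add_one_le.mp hk0
            have : (k : ℝ) ≤ -1 := by linarith
            constructor <;> linarith
          · subst hk0; push_cast at hk; constructor <;> linarith
          · have : (1 : ℝ) ≤ (k : ℝ) := by exact_mod_cast hk0
            constructor <;> linarith
        · rintro ⟨h0, h1⟩
          exact ⟨⟨0, by rw [abs_le]; push_cast; constructor <;> linarith⟩, by linarith, by linarith⟩
      rw [hset, Real.volume_Icc]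
      congr 1; ring

/-- The unit cube `[0,1]^d`. -/
def unitCube (d : ℕ) : Set (Fin d → ℝ) := Set.Icc 0 1

/-- The class `F_d` of functions `f : [0,1]^d → ℝ` that are `1`-Lipschitz with respect
to the torus metric `tdist`. -/
def LipClass (d : ℕ) : Set ((Fin d → ℝ) → ℝ) :=
  {f | ∀ x ∈ unitCube d, ∀ y ∈ unitCube d, |f x - f y| ≤ tdist d x y}

/-- Lebesgue measure restricted to the unit cube `[0,1]^d`. -/
noncomputable def cubeMeasure (d : ℕ) : Measure (Fin d → ℝ) :=
  volume.restrict (unitCube d)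

instance cubeMeasure_prob (d : ℕ) : IsProbabilityMeasure (cubeMeasure d) := by
  constructor
  show (volume.restrict (unitCube d)) Set.univ = 1
  unfold unitCube
  rw [Measure.restrict_apply_univ, Real.volume_Icc_pi]
  simp

lemma measurableSet_unitCube (d : ℕ) : MeasurableSet (unitCube d) := measurableSet_Icc

lemma continuous_tdist_right {d : ℕ} (x : Fin d → ℝ) : Continuous (fun y => tdist d x y) := by
  have h : Continuous (Prod.mk x : (Fin d → ℝ) → (Fin d → ℝ) × (Fin d → ℝ)) :=
    Continuous.prodMk_right x
  have h2 := Continuous.comp (continuous_tdist (d := d)) h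
  exact h2

lemma measurableSet_tdist_le (d : ℕ) (x : Fin d → ℝ) (t : ℝ) :
    MeasurableSet {y | tdist d x y ≤ t} :=
  (isClosed_le (continuous_tdist_right x) continuous_const).measurableSet

lemma cubeMeasure_tdist_le {d : ℕ} {x : Fin d → ℝ} {t : ℝ}
    (hx : x ∈ unitCube d) (ht0 : 0 ≤ t) (ht : t ≤ 1 / 2) :
    cubeMeasure d {y | tdist d x y ≤ t} = ENNReal.ofReal (2 * t) ^ d := by
  show (volume.restrict (unitCube d)) _ = _
  unfold unitCube
  rw [Measure.restrict_apply' measurableSet_Icc]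
  have hx' : ∀ i, 0 ≤ x i ∧ x i ≤ 1 := by
    intro i; exact ⟨hx.1 i, hx.2 i⟩
  have hset : {y | tdist d x y ≤ t} ∩ Icc 0 1
      = Set.pi univ (fun i : Fin d => {b | odist (x i) b ≤ t} ∩ Icc 0 1) := by
    ext y
    simp only [Set.mem_inter_iff, Set.mem_setOf_eq, Set.mem_pi, Set.mem_univ, forall_const,
      Set.mem_Icc, tdist_le_iff x y ht0]
    constructor
    · rintro ⟨h1, h2, h3⟩
      exact fun i => ⟨h1 i, h2 i, h3 i⟩
    · intro h
      exact ⟨fun i => (h i).1, fun i => (h i).2.1, fun i => (h i).2.2⟩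
  rw [hset, volume_pi, Measure.pi_pi]
  have : ∀ i : Fin d, volume ({b | odist (x i) b ≤ t} ∩ Icc 0 1) = ENNReal.ofReal (2 * t) :=
    fun i => measure_odist_le (hx' i).1 (hx' i).2 ht0 ht
  simp only [this, Finset.prod_const, Finset.card_univ, Fintype.card_fin]

lemma cubeMeasure_tdist_gt {d : ℕ} {x : Fin d → ℝ} {t : ℝ}
    (hx : x ∈ unitCube d) (ht0 : 0 ≤ t) (ht : t ≤ 1 / 2) :
    cubeMeasure d {y | t < tdist d x y} = ENNReal.ofReal (1 - (2 * t) ^ d) := by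
  have hc : {y | t < tdist d x y} = {y | tdist d x y ≤ t}ᶜ := by
    ext y; simp [not_le]
  rw [hc, measure_compl (measurableSet_tdist_le d x t) (measure_ne_top _ _), measure_univ,
    cubeMeasure_tdist_le hx ht0 ht, ← ENNReal.ofReal_pow (by linarith), ← ENNReal.ofReal_one,
    ← ENNReal.ofReal_sub _ (pow_nonneg (by linarith) d)]

lemma pi_tail {d n : ℕ} (hd : 0 < d) (hn : 0 < n) {x : Fin d → ℝ} (hx : x ∈ unitCube d)
    {t : ℝ} (ht0 : 0 ≤ t) :
    (Measure.pi fun _ : Fin n => cubeMeasure d) {ω : Fin n → Fin d → ℝ | t < ⨅ i, tdist d x (ω i)}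
      = ENNReal.ofReal (1 - (2 * t) ^ d) ^ n := by
  have : Nonempty (Fin n) := Fin.pos_iff_nonempty.mp hn
  have hset : {ω : Fin n → Fin d → ℝ | t < ⨅ i, tdist d x (ω i)}
      = Set.pi univ (fun _ : Fin n => {y | t < tdist d x y}) := by
    ext ω
    simp only [Set.mem_setOf_eq, Set.mem_pi, Set.mem_univ, forall_const]
    constructor
    · intro h i
      exact lt_of_lt_of_le h (ciInf_le (Set.Finite.bddBelow (Set.finite_range _)) i)
    · intro h
      obtain ⟨i0, hi0⟩ := Finite.exists_min fun i => tdist d x (ω i)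
      exact lt_of_lt_of_le (h i0) (le_ciInf hi0)
  rw [hset, Measure.pi_pi]
  rcases le_or_gt t (1 / 2) with h2 | h2
  · simp only [cubeMeasure_tdist_gt hx ht0 h2, Finset.prod_const, Finset.card_univ,
      Fintype.card_fin]
  · have hempty : {y : Fin d → ℝ | t < tdist d x y} = ∅ := by
      ext y
      simp only [Set.mem_setOf_eq, Set.mem_empty_iff_false, iff_false, not_lt]
      exact (tdist_le_half x y).trans h2.le
    have hneg : (1 : ℝ) - (2 * t) ^ d ≤ 0 := by
      have h1 : (1 : ℝ) < (2 * t) ^ d := one_lt_pow₀ (by linarith) hd.ne'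
      linarith
    rw [hempty]
    simp [measure_empty, Finset.prod_const, Finset.card_univ, Fintype.card_fin,
      zero_pow hn.ne', ENNReal.ofReal_eq_zero.mpr hneg]

lemma continuous_Y {d n : ℕ} (hn : 0 < n) :
    Continuous (fun p : (Fin d → ℝ) × (Fin n → Fin d → ℝ) => ⨅ i, tdist d p.1 (p.2 i)) := by
  have : Nonempty (Fin n) := Fin.pos_iff_nonempty.mp hn
  have key : (fun p : (Fin d → ℝ) × (Fin n → Fin d → ℝ) => ⨅ i, tdist d p.1 (p.2 i))
      = fun p => Finset.univ.inf' Finset.univ_nonempty (fun i => tdist d p.1 (p.2 i)) := by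
    funext p
    exact (Finset.inf'_univ_eq_ciInf _).symm
  rw [key]
  apply Continuous.finset_inf'_apply
  intro i _
  have h : Continuous (fun p : (Fin d → ℝ) × (Fin n → Fin d → ℝ)
      => ((p.1, p.2 i) : (Fin d → ℝ) × (Fin d → ℝ))) :=
    continuous_fst.prodMk ((continuous_apply i).comp continuous_snd)
  have h2 := Continuous.comp (continuous_tdist (d := d)) h
  exact h2

lemma integrable_aux {α : Type*} [TopologicalSpace α] [MeasurableSpace α] [OpensMeasurableSpace α]
    {P : Measure α} [IsProbabilityMeasure P]
    {f : α → ℝ} (hf : Continuous f) (h0 : ∀ a, 0 ≤ f a) (h1 : ∀ a, f a ≤ 1)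
    {q : ℝ} (hq : 0 ≤ q) : Integrable (fun a => f a ^ q) P := by
  refine Integrable.mono' (integrable_const 1) ?_ ?_
  · exact (hf.rpow_const fun a => Or.inr hq).aestronglyMeasurable
  · refine Filter.Eventually.of_forall fun a => ?_
    rw [Real.norm_of_nonneg (Real.rpow_nonneg (h0 a) q)]
    exact Real.rpow_le_one (h0 a) (h1 a) hq

lemma cube_ae_mem (d : ℕ) : ∀ᵐ x ∂(cubeMeasure d), x ∈ unitCube d := by
  have h : ∀ᵐ x ∂(volume.restrict (unitCube d)), x ∈ unitCube d :=
    ae_restrict_mem (measurableSet_unitCube d)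
  exact h

lemma expectation_eq {d n : ℕ} (hd : 0 < d) (hn : 0 < n) {q : ℝ} (hq : 1 ≤ q) :
    (∫ ω : Fin n → Fin d → ℝ, ∫ x in unitCube d, (⨅ i, tdist d x (ω i)) ^ q
        ∂volume ∂(Measure.pi fun _ : Fin n => cubeMeasure d))
    = ∫ s in Ioo (0:ℝ) ((2:ℝ) ^ (-q)), (1 - (2 * s ^ q⁻¹) ^ d) ^ n := by
  have hne : Nonempty (Fin n) := Fin.pos_iff_nonempty.mp hn
  have hq0 : (0:ℝ) < q := lt_of_lt_of_le one_pos hq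
  set μn := (Measure.pi fun _ : Fin n => cubeMeasure d) with hμn
  set Y : (Fin d → ℝ) × (Fin n → Fin d → ℝ) → ℝ :=
    fun p => ⨅ i, tdist d p.1 (p.2 i) with hY
  have hYc : Continuous Y := continuous_Y hn
  have hY0 : ∀ p, 0 ≤ Y p := fun p => le_ciInf fun i => tdist_nonneg _ _
  have hYhalf : ∀ p, Y p ≤ 1 / 2 := fun p =>
    le_trans (ciInf_le (Set.Finite.bddBelow (Set.finite_range _)) hne.some)
      (tdist_le_half _ _)
  have hY1 : ∀ p, Y p ≤ 1 := fun p => (hYhalf p).trans (by norm_num)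
  set P := (cubeMeasure d).prod μn with hP
  have hgint : Integrable (fun p => Y p ^ q) P := integrable_aux hYc hY0 hY1 hq0.le
  -- Step 1+2: rewrite as iterated integral and swap
  have hswapint : Integrable (fun z : (Fin n → Fin d → ℝ) × (Fin d → ℝ) => Y (z.2, z.1) ^ q)
      (μn.prod (cubeMeasure d)) := by
    refine integrable_aux ?_ (fun z => hY0 _) (fun z => hY1 _) hq0.le
    have h : Continuous (fun z : (Fin n → Fin d → ℝ) × (Fin d → ℝ) => ((z.2, z.1) :
        (Fin d → ℝ) × (Fin n → Fin d → ℝ))) := continuous_snd.prodMk continuous_fst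
    have h2 := Continuous.comp hYc h
    exact h2
  have step1 : (∫ ω : Fin n → Fin d → ℝ, ∫ x in unitCube d, (⨅ i, tdist d x (ω i)) ^ q
        ∂volume ∂μn) = ∫ ω, ∫ x, Y (x, ω) ^ q ∂(cubeMeasure d) ∂μn := rfl
  have step2 : (∫ ω, ∫ x, Y (x, ω) ^ q ∂(cubeMeasure d) ∂μn)
      = ∫ x, ∫ ω, Y (x, ω) ^ q ∂μn ∂(cubeMeasure d) :=
    integral_integral_swap hswapint
  have step3 : (∫ x, ∫ ω, Y (x, ω) ^ q ∂μn ∂(cubeMeasure d)) = ∫ p, Y p ^ q ∂P :=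
    integral_integral hgint
  rw [step1, step2, step3]
  -- Step 4 : layer cake
  rw [hgint.integral_eq_integral_meas_lt
    (Filter.Eventually.of_forall fun p => Real.rpow_nonneg (hY0 p) q)]
  -- Step 5 : reduce the domain
  have hc0 : (0:ℝ) < 2 ^ (-q) := Real.rpow_pos_of_pos two_pos _
  have hgle : ∀ p, Y p ^ q ≤ 2 ^ (-q) := by
    intro p
    have h1 : Y p ^ q ≤ (1/2 : ℝ) ^ q :=
      Real.rpow_le_rpow (hY0 p) (hYhalf p) hq0.le
    have h2 : ((1:ℝ)/2) ^ q = 2 ^ (-q) := by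
      rw [one_div, Real.inv_rpow (by norm_num : (0:ℝ) ≤ 2), ← Real.rpow_neg (by norm_num)]
    rwa [h2] at h1
  have hzero : ∀ᵐ (s : ℝ) ∂volume, s ∈ Ioi (0:ℝ) \ Ioo 0 ((2:ℝ) ^ (-q)) →
      (P {p | s < Y p ^ q}).toReal = 0 := by
    refine Filter.Eventually.of_forall fun s hs => ?_
    have hsc : 2 ^ (-q) ≤ s := by
      rcases hs with ⟨hs1, hs2⟩
      simp only [Set.mem_Ioo, not_and, not_lt] at hs2
      exact hs2 hs1
    have hempty : {p | s < Y p ^ q} = ∅ := by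
      ext p
      simp only [Set.mem_setOf_eq, Set.mem_empty_iff_false, iff_false, not_lt]
      exact (hgle p).trans hsc
    rw [hempty]
    simp
  simp only [measureReal_def]
  rw [setIntegral_eq_of_subset_of_ae_diff_eq_zero nullMeasurableSet_Ioi
    Ioo_subset_Ioi_self hzero]
  -- Step 6 : identify the integrand on `Ioo 0 (2^(-q))`
  refine setIntegral_congr_fun measurableSet_Ioo fun s hs => ?_
  obtain ⟨hs0, hs1⟩ := hs
  set t := s ^ q⁻¹ with htdef
  have ht0 : 0 < t := Real.rpow_pos_of_pos hs0 _
  have hthalf : t ≤ 1 / 2 := by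
    have h1 : t < (2 ^ (-q) : ℝ) ^ q⁻¹ :=
      Real.rpow_lt_rpow hs0.le hs1 (by positivity)
    have h2 : ((2:ℝ) ^ (-q)) ^ q⁻¹ = 1 / 2 := by
      rw [← Real.rpow_mul (by norm_num : (0:ℝ) ≤ 2)]
      rw [show -q * q⁻¹ = -1 by field_simp]
      rw [Real.rpow_neg_one]
      norm_num
    rw [h2] at h1
    exact h1.le
  have hset : {p | s < Y p ^ q} = {p | t < Y p} := by
    ext p
    simp only [Set.mem_setOf_eq]
    exact (Real.rpow_inv_lt_iff_of_pos hs0.le (hY0 p) hq0).symm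
  rw [hset]
  have hms : MeasurableSet {p | t < Y p} :=
    (isOpen_lt continuous_const hYc).measurableSet
  rw [hP, Measure.prod_apply hms]
  have hlint : (∫⁻ x, μn (Prod.mk x ⁻¹' {p | t < Y p}) ∂(cubeMeasure d))
      = ENNReal.ofReal (1 - (2 * t) ^ d) ^ n := by
    have hcongr : ∀ᵐ x ∂(cubeMeasure d),
        μn (Prod.mk x ⁻¹' {p | t < Y p}) = ENNReal.ofReal (1 - (2 * t) ^ d) ^ n := by
      filter_upwards [cube_ae_mem d] with x hx
      have hpre : Prod.mk x ⁻¹' {p | t < Y p} = {ω : Fin n → Fin d → ℝ | t < ⨅ i, tdist d x (ω i)} := rfl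
      rw [hpre, hμn]
      exact pi_tail hd hn hx ht0.le
    rw [lintegral_congr_ae hcongr, lintegral_const, measure_univ, mul_one]
  rw [hlint]
  have hu0 : 0 ≤ 1 - (2 * t) ^ d := by
    have : (2 * t) ^ d ≤ 1 := pow_le_one₀ (by linarith) (by linarith)
    linarith
  rw [ENNReal.toReal_pow, ENNReal.toReal_ofReal hu0]

lemma subst_eq {d n : ℕ} (hd : 0 < d) {q : ℝ} (hq : 0 < q) :
    ∫ s in Ioo (0:ℝ) ((2:ℝ) ^ (-q)), (1 - (2 * s ^ q⁻¹) ^ d) ^ n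
      = (2:ℝ) ^ (-q) * (q / d) * ∫ u in Ioo (0:ℝ) 1, u ^ (q / d - 1) * (1 - u) ^ n := by
  have hd0 : (0:ℝ) < d := by exact_mod_cast hd
  set a : ℝ := q / d with ha
  have ha0 : 0 < a := div_pos hq hd0
  set c : ℝ := (2:ℝ) ^ (-q) with hc
  have hc0 : 0 < c := Real.rpow_pos_of_pos two_pos _
  have hc2q : (2:ℝ) ^ q * c = 1 := by
    rw [hc, ← Real.rpow_add two_pos]; simp
  set ψ : ℝ → ℝ := fun u => c * u ^ a with hψ
  have hderiv : ∀ u ∈ Ioo (0:ℝ) 1, HasDerivWithinAt ψ (c * (a * u ^ (a - 1))) (Ioo 0 1) u := by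
    intro u hu
    exact ((Real.hasDerivAt_rpow_const (Or.inl hu.1.ne')).const_mul c).hasDerivWithinAt
  have hinj : Set.InjOn ψ (Ioo 0 1) := by
    intro u hu v hv huv
    have h1 : u ^ a = v ^ a := mul_left_cancel₀ hc0.ne' huv
    rcases lt_trichotomy u v with h | h | h
    · exact absurd (Real.rpow_lt_rpow hu.1.le h ha0) (by rw [h1]; exact lt_irrefl _)
    · exact h
    · exact absurd (Real.rpow_lt_rpow hv.1.le h ha0) (by rw [h1]; exact lt_irrefl _)
  have himg : ψ '' Ioo 0 1 = Ioo 0 c := by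
    ext s
    constructor
    · rintro ⟨u, hu, rfl⟩
      refine ⟨mul_pos hc0 (Real.rpow_pos_of_pos hu.1 a), ?_⟩
      have h1 : u ^ a < 1 := Real.rpow_lt_one hu.1.le hu.2 ha0
      calc c * u ^ a < c * 1 := mul_lt_mul_of_pos_left h1 hc0
      _ = c := mul_one c
    · rintro ⟨hs0, hsc⟩
      refine ⟨((2:ℝ) ^ q * s) ^ a⁻¹, ⟨?_, ?_⟩, ?_⟩
      · exact Real.rpow_pos_of_pos (mul_pos (Real.rpow_pos_of_pos two_pos q) hs0) _
      · have h2 : (2:ℝ) ^ q * s < 1 := by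
          calc (2:ℝ) ^ q * s < 2 ^ q * c :=
                mul_lt_mul_of_pos_left hsc (Real.rpow_pos_of_pos two_pos q)
          _ = 1 := hc2q
        exact Real.rpow_lt_one (by positivity) h2 (by positivity)
      · show c * (((2:ℝ) ^ q * s) ^ a⁻¹) ^ a = s
        rw [← Real.rpow_mul (by positivity), inv_mul_cancel₀ ha0.ne', Real.rpow_one,
          ← mul_assoc, mul_comm c ((2:ℝ)^q), hc2q, one_mul]
  have key : ∀ u ∈ Ioo (0:ℝ) 1, (2 * (ψ u) ^ q⁻¹) ^ d = u := by
    intro u hu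
    have h1 : (ψ u) ^ q⁻¹ = c ^ q⁻¹ * (u ^ a) ^ q⁻¹ := by
      rw [hψ]
      exact Real.mul_rpow hc0.le (Real.rpow_nonneg hu.1.le a)
    have h2 : c ^ q⁻¹ = 2⁻¹ := by
      rw [hc, ← Real.rpow_mul (by norm_num : (0:ℝ) ≤ 2)]
      rw [show -q * q⁻¹ = -1 by field_simp]
      exact Real.rpow_neg_one 2
    have h3 : (u ^ a) ^ q⁻¹ = u ^ ((d:ℝ))⁻¹ := by
      rw [← Real.rpow_mul hu.1.le]
      congr 1
      rw [ha]; field_simp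
    rw [h1, h2, h3, ← mul_assoc, mul_inv_cancel₀ (two_ne_zero), one_mul]
    rw [← Real.rpow_natCast (u ^ ((d:ℝ))⁻¹) d, ← Real.rpow_mul hu.1.le,
      inv_mul_cancel₀ (by exact_mod_cast hd.ne' : ((d:ℝ)) ≠ 0), Real.rpow_one]
  rw [← himg, integral_image_eq_integral_abs_deriv_smul measurableSet_Ioo hderiv hinj
    (fun s => (1 - (2 * s ^ q⁻¹) ^ d) ^ n)]
  rw [← MeasureTheory.integral_const_mul]
  refine setIntegral_congr_fun measurableSet_Ioo fun u hu => ?_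
  have habs : |c * (a * u ^ (a - 1))| = c * (a * u ^ (a - 1)) := by
    apply abs_of_pos
    have := Real.rpow_pos_of_pos hu.1 (a - 1)
    positivity
  rw [smul_eq_mul, habs, key u hu]
  ring

lemma beta_eq {a : ℝ} (ha : 0 < a) (n : ℕ) :
    (n:ℝ) ^ a * ∫ u in Ioo (0:ℝ) 1, u ^ (a - 1) * (1 - u) ^ n = Real.GammaSeq a n := by
  have h1 : (∫ u in Ioo (0:ℝ) 1, u ^ (a - 1) * (1 - u) ^ n)
      = ∫ u in (0:ℝ)..1, u ^ (a - 1) * (1 - u) ^ n := by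
    rw [intervalIntegral.integral_of_le zero_le_one, integral_Ioc_eq_integral_Ioo]
  have h2 : Complex.betaIntegral a (n + 1)
      = ((∫ u in (0:ℝ)..1, u ^ (a - 1) * (1 - u) ^ n : ℝ) : ℂ) := by
    rw [Complex.betaIntegral, ← intervalIntegral.integral_ofReal]
    refine intervalIntegral.integral_congr_ae ?_
    refine Filter.Eventually.of_forall fun x hx => ?_
    rw [Set.uIoc_of_le (by norm_num : (0:ℝ) ≤ 1)] at hx
    have hx0 : 0 < x := hx.1
    have e1 : ((a:ℂ)) - 1 = (((a - 1 : ℝ)) : ℂ) := by push_cast; ring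
    have e2 : ((n:ℂ)) + 1 - 1 = ((n : ℕ) : ℂ) := by push_cast; ring
    rw [e1, ← Complex.ofReal_cpow hx0.le, e2, Complex.cpow_natCast]
    push_cast
    ring
  have h3 := Complex.GammaSeq_eq_betaIntegral_of_re_pos (s := (a:ℂ)) (by simpa using ha) n
  have h4 : (Real.GammaSeq a n : ℂ) = Complex.GammaSeq (a:ℂ) n := by
    dsimp only [Real.GammaSeq, Complex.GammaSeq]
    push_cast
    rw [Complex.ofReal_cpow n.cast_nonneg]
    norm_num
  have h5 : (((n:ℝ) ^ a * ∫ u in (0:ℝ)..1, u ^ (a - 1) * (1 - u) ^ n : ℝ) : ℂ)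
      = Complex.GammaSeq (a:ℂ) n := by
    rw [h3, h2]
    push_cast
    rw [Complex.ofReal_cpow n.cast_nonneg]
    norm_num
  rw [h1]
  exact_mod_cast h5.trans h4.symm

theorem stmt13 (d : ℕ) (hd : 0 < d) (q : ℝ) (hq : 1 ≤ q) :
    Filter.Tendsto
      (fun n : ℕ => (n : ℝ) ^ (1 / (d : ℝ)) *
        (∫ ω : Fin n → Fin d → ℝ,
            ∫ x in unitCube d, (⨅ i, tdist d x (ω i)) ^ q
            ∂volume ∂(Measure.pi fun _ : Fin n => cubeMeasure d)) ^ (1/q))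
      Filter.atTop
      (nhds ((1/2) * Real.Gamma (q / d + 1) ^ (1/q))) := by
  have hq0 : (0:ℝ) < q := lt_of_lt_of_le one_pos hq
  have hd0 : (0:ℝ) < d := by exact_mod_cast hd
  set a : ℝ := q / d with ha
  have ha0 : 0 < a := div_pos hq0 hd0
  set c : ℝ := (2:ℝ) ^ (-q) * (q / d) with hc
  have hc0 : 0 < c := mul_pos (Real.rpow_pos_of_pos two_pos _) (div_pos hq0 hd0)
  set E : ℕ → ℝ := fun n => ∫ ω : Fin n → Fin d → ℝ,
      ∫ x in unitCube d, (⨅ i, tdist d x (ω i)) ^ q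
      ∂volume ∂(Measure.pi fun _ : Fin n => cubeMeasure d) with hE
  have hE0 : ∀ n, 0 ≤ E n := by
    intro n
    refine integral_nonneg fun ω => integral_nonneg fun x => ?_
    exact Real.rpow_nonneg (Real.iInf_nonneg fun i => tdist_nonneg _ _) q
  have hEeq : ∀ n : ℕ, 1 ≤ n → E n = c * ∫ u in Ioo (0:ℝ) 1, u ^ (a - 1) * (1 - u) ^ n := by
    intro n hn
    have h := expectation_eq (d := d) (n := n) hd hn (q := q) hq
    rw [subst_eq hd hq0] at h
    exact h
  -- limit of `n ^ a * E n`
  have htend2 : Filter.Tendsto (fun n : ℕ => (n:ℝ) ^ a * E n) Filter.atTop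
      (nhds (c * Real.Gamma a)) := by
    have htend1 : Filter.Tendsto (fun n : ℕ => c * Real.GammaSeq a n) Filter.atTop
        (nhds (c * Real.Gamma a)) := (Real.GammaSeq_tendsto_Gamma a).const_mul c
    refine htend1.congr' ?_
    filter_upwards [Filter.eventually_ge_atTop 1] with n hn
    rw [hEeq n hn, ← beta_eq ha0 n]
    ring
  -- apply continuity of `x ↦ x ^ (1/q)`
  have hcont : ContinuousAt (fun x : ℝ => x ^ (1/q)) (c * Real.Gamma a) :=
    Real.continuousAt_rpow_const _ _ (Or.inr (by positivity))
  have htend3 : Filter.Tendsto (fun n : ℕ => ((n:ℝ) ^ a * E n) ^ (1/q)) Filter.atTop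
      (nhds ((c * Real.Gamma a) ^ (1/q))) := hcont.tendsto.comp htend2
  -- identify the limit value
  have hval : (c * Real.Gamma a) ^ (1/q) = (1/2) * Real.Gamma (q / d + 1) ^ (1/q) := by
    have hgamma : c * Real.Gamma a = (2:ℝ) ^ (-q) * Real.Gamma (a + 1) := by
      rw [Real.Gamma_add_one ha0.ne', hc]
      ring
    rw [hgamma, Real.mul_rpow (Real.rpow_nonneg (by norm_num) _)
      (Real.Gamma_pos_of_pos (by linarith)).le]
    congr 1
    rw [← Real.rpow_mul (by norm_num : (0:ℝ) ≤ 2)]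
    rw [show -q * (1/q) = -1 by field_simp]
    rw [Real.rpow_neg_one]
    norm_num
  rw [← hval]
  refine htend3.congr' ?_
  filter_upwards [Filter.eventually_ge_atTop 1] with n hn
  rw [Real.mul_rpow (Real.rpow_nonneg n.cast_nonneg a) (hE0 n),
    ← Real.rpow_mul n.cast_nonneg]
  rw [show a * (1/q) = 1 / (d:ℝ) by rw [ha]; field_simp]
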